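/- Suppose b = c = 0, β² ≡ D (mod p^a), and m = [[p^a, β, γ₁],[0,1,γ₂],[0,0,1]]. Then u = [[u₁₁, u₁₂],[u₁₂, u₂₂]] ∈ U_m if and only if u₁₁ ∈ p^{-a}Z_p, u₁₂ + β u₁₁ ∈ Z_p, and u₂₂ + β u₁₂ ∈ Z_p; and for every such u, χ(u) = ψ(u₁₁(β² - D)) = 1. Hence U_m ⊆ ker χ, and the additive Haar measure of U_m/(symmetric matrices in M_2(Z_p)) equals p^a. -/

import Mathlib

open scoped Matrix

/-- The matrix y = [[p^a, β],[0, p^b]]. -/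
noncomputable def yMat (p a b : ℕ) [Fact p.Prime] (β : ℚ_[p]) : Matrix (Fin 2) (Fin 2) ℚ_[p] :=
  !![(p : ℚ_[p]) ^ a, β; 0, (p : ℚ_[p]) ^ b]

/-- Membership in U_m: u is symmetric, u·y is integral, and the row vector
(γ₁,γ₂)·u·y lies in p^c ℤ_p ⊕ p^{min(b,c)} ℤ_p. -/
def memUm (p : ℕ) [Fact p.Prime] (a b c : ℕ) (β γ₁ γ₂ : ℚ_[p])
    (u : Matrix (Fin 2) (Fin 2) ℚ_[p]) : Prop :=
  u.IsSymm ∧ (∀ i j, ‖(u * yMat p a b β) i j‖ ≤ 1) ∧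
  ‖γ₁ * (u * yMat p a b β) 0 0 + γ₂ * (u * yMat p a b β) 1 0‖ ≤ (p : ℝ) ^ (-(c : ℤ)) ∧
  ‖γ₁ * (u * yMat p a b β) 0 1 + γ₂ * (u * yMat p a b β) 1 1‖ ≤ (p : ℝ) ^ (-(min b c : ℤ))

/-- χ(n(u)) = ψ(-D·u₁₁ + u₂₂). -/
noncomputable def chiUm (p : ℕ) [Fact p.Prime] (ψ : ℚ_[p] → ℂ) (D : ℚ_[p])
    (u : Matrix (Fin 2) (Fin 2) ℚ_[p]) : ℂ :=
  ψ (-D * u 0 0 + u 1 1)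

theorem stmt10 {p : ℕ} [Fact p.Prime] (hp2 : p ≠ 2) (a : ℕ)
    (β γ₁ γ₂ D : ℚ_[p]) (ψ : ℚ_[p] → ℂ)
    (hψ : ∀ x y, ψ (x + y) = ψ x * ψ y) (hψtriv : ∀ x, ψ x = 1 ↔ ‖x‖ ≤ 1)
    (hD : ‖D‖ = 1) (hβ : ‖β‖ ≤ 1) (hγ₁ : ‖γ₁‖ ≤ 1) (hγ₂ : ‖γ₂‖ ≤ 1)
    (hcong : ‖β ^ 2 - D‖ ≤ (p : ℝ) ^ (-(a : ℤ))) :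
    (∀ u : Matrix (Fin 2) (Fin 2) ℚ_[p], u.IsSymm →
      (memUm p a 0 0 β γ₁ γ₂ u ↔
        (‖u 0 0‖ ≤ (p : ℝ) ^ (a : ℤ) ∧ ‖u 0 1 + β * u 0 0‖ ≤ 1 ∧
          ‖u 1 1 + β * u 0 1‖ ≤ 1))) ∧
    (∀ u, memUm p a 0 0 β γ₁ γ₂ u →
      chiUm p ψ D u = ψ (u 0 0 * (β ^ 2 - D)) ∧ chiUm p ψ D u = 1) ∧
    ∃ φ : {u : Matrix (Fin 2) (Fin 2) ℚ_[p] // memUm p a 0 0 β γ₁ γ₂ u} →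
        ZMod (p ^ a),
      Function.Surjective φ ∧
      ∀ u v, φ u = φ v ↔ (∀ i j, ‖(u.1 - v.1) i j‖ ≤ 1) := by
  have hp : p.Prime := Fact.out
  have hp0 : (0:ℝ) < (p:ℝ) := by exact_mod_cast hp.pos
  have hp1 : (1:ℝ) ≤ (p:ℝ) := by exact_mod_cast hp.one_lt.le
  have hpq0 : ((p:ℚ_[p]) : ℚ_[p]) ≠ 0 := by
    exact_mod_cast (Nat.cast_ne_zero (R := ℚ_[p])).2 hp.ne_zero
  have hpan : (0:ℝ) < (p:ℝ) ^ (-(a:ℤ)) := zpow_pos hp0 _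
  have hpa1 : (1:ℝ) ≤ (p:ℝ) ^ (a:ℤ) := by rw [zpow_natCast]; exact one_le_pow₀ hp1
  have hprod : (p:ℝ) ^ (a:ℤ) * (p:ℝ) ^ (-(a:ℤ)) = 1 := by
    rw [← zpow_add₀ (ne_of_gt hp0)]; simp
  have hnp : ‖((p:ℚ_[p]))^a‖ = (p:ℝ) ^ (-(a:ℤ)) := Padic.norm_p_pow a
  have tri : ∀ x y : ℚ_[p], ‖x + y‖ ≤ max ‖x‖ ‖y‖ := Padic.nonarchimedean
  have hle : ∀ x y : ℚ_[p], ‖x‖ ≤ 1 → ‖y‖ ≤ 1 → ‖x + y‖ ≤ 1 := fun x y hx hy =>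
    le_trans (tri x y) (max_le hx hy)
  have hmul1 : ∀ x y : ℚ_[p], ‖x‖ ≤ 1 → ‖y‖ ≤ 1 → ‖x * y‖ ≤ 1 := fun x y hx hy => by
    rw [norm_mul]; exact mul_le_one₀ hx (norm_nonneg _) hy
  -- key membership characterization
  have h00iff : ∀ x : ℚ_[p], ‖x * (p:ℚ_[p])^a‖ ≤ 1 ↔ ‖x‖ ≤ (p:ℝ)^(a:ℤ) := by
    intro x
    rw [norm_mul, hnp, show (1:ℝ) = (p:ℝ)^(a:ℤ) * (p:ℝ)^(-(a:ℤ)) from hprod.symm,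
      mul_le_mul_iff_of_pos_right hpan]
  have key : ∀ u : Matrix (Fin 2) (Fin 2) ℚ_[p], memUm p a 0 0 β γ₁ γ₂ u ↔
      (u.IsSymm ∧ ‖u 0 0‖ ≤ (p : ℝ) ^ (a : ℤ) ∧ ‖u 0 1 + β * u 0 0‖ ≤ 1 ∧
        ‖u 1 1 + β * u 0 1‖ ≤ 1) := by
    intro u
    have e00 : (u * yMat p a 0 β) 0 0 = u 0 0 * (p:ℚ_[p])^a := by
      simp [yMat, Matrix.mul_apply, Fin.sum_univ_two]
    have e01 : (u * yMat p a 0 β) 0 1 = u 0 0 * β + u 0 1 := by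
      simp [yMat, Matrix.mul_apply, Fin.sum_univ_two]
    have e10 : (u * yMat p a 0 β) 1 0 = u 1 0 * (p:ℚ_[p])^a := by
      simp [yMat, Matrix.mul_apply, Fin.sum_univ_two]
    have e11 : (u * yMat p a 0 β) 1 1 = u 1 0 * β + u 1 1 := by
      simp [yMat, Matrix.mul_apply, Fin.sum_univ_two]
    constructor
    · rintro ⟨hs, hint, -, -⟩
      have hsym : u 1 0 = u 0 1 := hs.apply 0 1
      refine ⟨hs, ?_, ?_, ?_⟩
      · have := hint 0 0; rw [e00, h00iff] at this; exact this
      · have := hint 0 1; rw [e01] at this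
        rw [show u 0 1 + β * u 0 0 = u 0 0 * β + u 0 1 from by ring]; exact this
      · have := hint 1 1; rw [e11, hsym] at this
        rw [show u 1 1 + β * u 0 1 = u 0 1 * β + u 1 1 from by ring]; exact this
    · rintro ⟨hs, h1, h2, h3⟩
      have hsym : u 1 0 = u 0 1 := hs.apply 0 1
      have h01 : ‖u 0 1‖ ≤ (p:ℝ)^(a:ℤ) := by
        have : u 0 1 = (u 0 1 + β * u 0 0) + (-β) * u 0 0 := by ring
        rw [this]
        refine le_trans (tri _ _) (max_le (le_trans h2 hpa1) ?_)
        rw [norm_mul, norm_neg]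
        calc ‖β‖ * ‖u 0 0‖ ≤ 1 * ((p:ℝ)^(a:ℤ)) :=
              mul_le_mul hβ h1 (norm_nonneg _) zero_le_one
          _ = (p:ℝ)^(a:ℤ) := one_mul _
      have hint : ∀ i j, ‖(u * yMat p a 0 β) i j‖ ≤ 1 := by
        intro i j
        fin_cases i <;> fin_cases j
        · show ‖(u * yMat p a 0 β) 0 0‖ ≤ 1
          rw [e00, h00iff]; exact h1
        · show ‖(u * yMat p a 0 β) 0 1‖ ≤ 1
          rw [e01, show u 0 0 * β + u 0 1 = u 0 1 + β * u 0 0 from by ring]; exact h2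
        · show ‖(u * yMat p a 0 β) 1 0‖ ≤ 1
          rw [e10, hsym, h00iff]; exact h01
        · show ‖(u * yMat p a 0 β) 1 1‖ ≤ 1
          rw [e11, hsym, show u 0 1 * β + u 1 1 = u 1 1 + β * u 0 1 from by ring]; exact h3
      refine ⟨hs, hint, ?_, ?_⟩
      · simpa using hle _ _ (hmul1 _ _ hγ₁ (hint 0 0)) (hmul1 _ _ hγ₂ (hint 1 0))
      · simpa using hle _ _ (hmul1 _ _ hγ₁ (hint 0 1)) (hmul1 _ _ hγ₂ (hint 1 1))
  refine ⟨fun u hs => by rw [key u]; simp [hs], ?_, ?_⟩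
  · -- character values
    intro u hu
    obtain ⟨hs, h1, h2, h3⟩ := (key u).1 hu
    have h4 : ψ (u 1 1 - u 0 0 * β ^ 2) = 1 := by
      rw [hψtriv]
      have : u 1 1 - u 0 0 * β ^ 2 = (u 1 1 + β * u 0 1) + (-β) * (u 0 1 + β * u 0 0) := by
        ring
      rw [this]
      refine hle _ _ h3 ?_
      rw [norm_mul, norm_neg]
      exact mul_le_one₀ hβ (norm_nonneg _) h2
    have h5 : ψ (u 0 0 * (β ^ 2 - D)) = 1 := by
      rw [hψtriv, norm_mul]
      calc ‖u 0 0‖ * ‖β ^ 2 - D‖ ≤ (p:ℝ)^(a:ℤ) * (p:ℝ)^(-(a:ℤ)) :=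
            mul_le_mul h1 hcong (norm_nonneg _) (by positivity)
        _ = 1 := hprod
    have heq : chiUm p ψ D u = ψ (u 0 0 * (β ^ 2 - D)) := by
      unfold chiUm
      rw [show -D * u 0 0 + u 1 1 = u 0 0 * (β ^ 2 - D) + (u 1 1 - u 0 0 * β ^ 2) from by ring,
        hψ, h4, mul_one]
    exact ⟨heq, heq.trans h5⟩
  · -- the surjection onto ZMod (p^a)
    haveI : NeZero (p ^ a) := ⟨pow_ne_zero a hp.ne_zero⟩
    have hval : ∀ u : {u : Matrix (Fin 2) (Fin 2) ℚ_[p] // memUm p a 0 0 β γ₁ γ₂ u},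
        ‖(p:ℚ_[p])^a * u.1 0 0‖ ≤ 1 := by
      intro u
      obtain ⟨-, h1, -, -⟩ := (key u.1).1 u.2
      rw [norm_mul, hnp]
      calc (p:ℝ)^(-(a:ℤ)) * ‖u.1 0 0‖ ≤ (p:ℝ)^(-(a:ℤ)) * (p:ℝ)^(a:ℤ) := by
            exact mul_le_mul_of_nonneg_left h1 (le_of_lt hpan)
        _ = 1 := by rw [mul_comm]; exact hprod
    refine ⟨fun u => PadicInt.toZModPow a ⟨(p:ℚ_[p])^a * u.1 0 0, hval u⟩, ?_, ?_⟩
    · -- surjective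
      intro r
      set x : ℚ_[p] := ((r.val : ℕ) : ℚ_[p]) / (p:ℚ_[p])^a with hx
      have hxnorm : ‖x‖ ≤ (p:ℝ)^(a:ℤ) := by
        rw [hx, norm_div, hnp]
        have hnum : ‖((r.val : ℕ) : ℚ_[p])‖ ≤ 1 := by
          have := Padic.norm_int_le_one (p := p) (r.val : ℤ)
          simpa using this
        calc ‖((r.val : ℕ) : ℚ_[p])‖ / (p:ℝ)^(-(a:ℤ)) ≤ 1 / (p:ℝ)^(-(a:ℤ)) := by
              exact div_le_div_of_nonneg_right hnum hpan.le
          _ = (p:ℝ)^(a:ℤ) := by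
              rw [one_div, ← zpow_neg, neg_neg]
      set M : Matrix (Fin 2) (Fin 2) ℚ_[p] := !![x, -(β*x); -(β*x), β^2*x] with hM
      have hMmem : memUm p a 0 0 β γ₁ γ₂ M := by
        rw [key]
        refine ⟨?_, ?_, ?_, ?_⟩
        · apply Matrix.IsSymm.ext
          intro i j
          fin_cases i <;> fin_cases j <;> simp [hM]
        · simpa [hM] using hxnorm
        · show ‖-(β*x) + β * x‖ ≤ 1
          rw [show -(β*x) + β * x = 0 from by ring, norm_zero]; exact zero_le_one
        · show ‖β^2*x + β * -(β*x)‖ ≤ 1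
          rw [show β^2*x + β * -(β*x) = 0 from by ring, norm_zero]; exact zero_le_one
      refine ⟨⟨M, hMmem⟩, ?_⟩
      have hM00 : M 0 0 = x := by simp [hM]
      have hpx : (p:ℚ_[p])^a * x = ((r.val : ℕ) : ℚ_[p]) := by
        rw [hx, mul_div_cancel₀ _ (pow_ne_zero a hpq0)]
      have hsub : (⟨(p:ℚ_[p])^a * M 0 0, hval ⟨M, hMmem⟩⟩ : ℤ_[p]) = ((r.val : ℕ) : ℤ_[p]) := by
        apply Subtype.ext
        show (p:ℚ_[p])^a * x = (((r.val : ℕ) : ℤ_[p]) : ℚ_[p])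
        rw [PadicInt.coe_natCast]
        exact hpx
      show PadicInt.toZModPow a (⟨(p:ℚ_[p])^a * M 0 0, hval ⟨M, hMmem⟩⟩ : ℤ_[p]) = r
      rw [hsub, map_natCast]
      exact ZMod.natCast_zmod_val r
    · -- fibers
      intro u v
      obtain ⟨hsu, hu1, hu2, hu3⟩ := (key u.1).1 u.2
      obtain ⟨hsv, hv1, hv2, hv3⟩ := (key v.1).1 v.2
      have step1 : PadicInt.toZModPow a (⟨(p:ℚ_[p])^a * u.1 0 0, hval u⟩ : ℤ_[p]) =
          PadicInt.toZModPow a (⟨(p:ℚ_[p])^a * v.1 0 0, hval v⟩ : ℤ_[p]) ↔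
          ‖u.1 0 0 - v.1 0 0‖ ≤ 1 := by
        set xu : ℤ_[p] := (⟨(p:ℚ_[p])^a * u.1 0 0, hval u⟩ : ℤ_[p]) with hxu
        set xv : ℤ_[p] := (⟨(p:ℚ_[p])^a * v.1 0 0, hval v⟩ : ℤ_[p]) with hxv
        rw [← sub_eq_zero, ← map_sub, ← RingHom.mem_ker, PadicInt.ker_toZModPow,
          ← PadicInt.norm_le_pow_iff_mem_span_pow]
        have hnxy : ‖xu - xv‖ = ‖(p:ℚ_[p])^a * (u.1 0 0 - v.1 0 0)‖ := by
          rw [PadicInt.norm_def, PadicInt.coe_sub]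
          show ‖(p:ℚ_[p])^a * u.1 0 0 - (p:ℚ_[p])^a * v.1 0 0‖ = _
          congr 1
          ring
        rw [hnxy, norm_mul, hnp]
        constructor
        · intro h
          have := (mul_le_mul_iff_of_pos_left hpan).1 (le_trans h (le_of_eq (mul_one _).symm))
          exact this
        · intro h
          calc (p:ℝ)^(-(a:ℤ)) * ‖u.1 0 0 - v.1 0 0‖ ≤ (p:ℝ)^(-(a:ℤ)) * 1 :=
                mul_le_mul_of_nonneg_left h (le_of_lt hpan)
            _ = (p:ℝ)^(-(a:ℤ)) := mul_one _
      rw [step1]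
      constructor
      · intro h00 i j
        have h01 : ‖u.1 0 1 - v.1 0 1‖ ≤ 1 := by
          have : u.1 0 1 - v.1 0 1 =
              (u.1 0 1 + β * u.1 0 0) + (-(v.1 0 1 + β * v.1 0 0) + (-β) * (u.1 0 0 - v.1 0 0)) := by
            ring
          rw [this]
          refine hle _ _ hu2 (hle _ _ ?_ ?_)
          · rw [norm_neg]; exact hv2
          · rw [norm_mul, norm_neg]; exact mul_le_one₀ hβ (norm_nonneg _) h00
        have h11 : ‖u.1 1 1 - v.1 1 1‖ ≤ 1 := by
          have : u.1 1 1 - v.1 1 1 =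
              (u.1 1 1 + β * u.1 0 1) + (-(v.1 1 1 + β * v.1 0 1) + (-β) * (u.1 0 1 - v.1 0 1)) := by
            ring
          rw [this]
          refine hle _ _ hu3 (hle _ _ ?_ ?_)
          · rw [norm_neg]; exact hv3
          · rw [norm_mul, norm_neg]; exact mul_le_one₀ hβ (norm_nonneg _) h01
        have hsymu : u.1 1 0 = u.1 0 1 := hsu.apply 0 1
        have hsymv : v.1 1 0 = v.1 0 1 := hsv.apply 0 1
        fin_cases i <;> fin_cases j
        · show ‖(u.1 - v.1) 0 0‖ ≤ 1
          rw [Matrix.sub_apply]; exact h00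
        · show ‖(u.1 - v.1) 0 1‖ ≤ 1
          rw [Matrix.sub_apply]; exact h01
        · show ‖(u.1 - v.1) 1 0‖ ≤ 1
          rw [Matrix.sub_apply, hsymu, hsymv]; exact h01
        · show ‖(u.1 - v.1) 1 1‖ ≤ 1
          rw [Matrix.sub_apply]; exact h11
      · intro h
        have := h 0 0
        rwa [Matrix.sub_apply] at this
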